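/- arXiv:2101.10228 — 2 statements merged into one kernel-verified Lean document; each statement's English description precedes it below -/
import Mathlib

section
/- Let R > 0 and let 0 ≤ γ ≤ β ≤ π. Set A = (−R, 0), B = P_R(β), C = P_R(γ), D = (R, 0), so that ABCD is a quadrilateral inscribed in the upper semicircle with the side AD as diameter. Writing a = dist A B, b = dist B C, c = dist C D, and d = dist A D = 2R, the sides satisfy d² = a² + b² + c² + 2abc/d. -/
noncomputable def P (R θ : ℝ) : EuclideanSpace ℝ (Fin 2) :=
  (WithLp.equiv 2 (Fin 2 → ℝ)).symm ![R * Real.cos θ, R * Real.sin θ]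

lemma distP (R θ₁ θ₂ : ℝ) (hR : 0 ≤ R) :
    dist (P R θ₁) (P R θ₂) = 2 * R * |Real.sin ((θ₁ - θ₂) / 2)| := by
  have h : dist (P R θ₁) (P R θ₂) = Real.sqrt ((2 * R * Real.sin ((θ₁ - θ₂) / 2)) ^ 2) := by
    rw [EuclideanSpace.dist_eq]
    congr 1
    simp only [P, WithLp.equiv_symm_apply, PiLp.toLp_apply, Fin.sum_univ_two, Matrix.cons_val_zero,
      Matrix.cons_val_one, Matrix.head_cons, Real.dist_eq, sq_abs]
    have hs : Real.sin ((θ₁ - θ₂) / 2) ^ 2 = (1 - Real.cos (θ₁ - θ₂)) / 2 := by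
      have := Real.cos_sq ((θ₁ - θ₂) / 2)
      have h0 := Real.sin_sq_add_cos_sq ((θ₁ - θ₂) / 2)
      rw [show 2 * ((θ₁ - θ₂) / 2) = θ₁ - θ₂ by ring] at this
      linarith
    have hc : Real.cos (θ₁ - θ₂) = Real.cos θ₁ * Real.cos θ₂ + Real.sin θ₁ * Real.sin θ₂ :=
      Real.cos_sub _ _
    have h1 := Real.sin_sq_add_cos_sq θ₁
    have h2 := Real.sin_sq_add_cos_sq θ₂
    linear_combination R^2*h1 + R^2*h2 + 2*R^2*hc - 4*R^2*hs
  rw [h, Real.sqrt_sq_eq_abs, abs_mul, abs_mul]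
  rw [abs_of_nonneg (by norm_num : (0:ℝ) ≤ 2), abs_of_nonneg hR]

theorem quadrilateral_pythagoras (R β γ : ℝ) (hR : 0 < R)
    (hγ : 0 ≤ γ) (hβγ : γ ≤ β) (hβ : β ≤ Real.pi)
    (A B C D : EuclideanSpace ℝ (Fin 2))
    (hA : A = P R Real.pi) (hB : B = P R β) (hC : C = P R γ) (hD : D = P R 0)
    (a b c d : ℝ)
    (ha : a = dist A B) (hb : b = dist B C) (hc : c = dist C D) (hd : d = dist A D) :
    d = 2 * R ∧ d ^ 2 = a ^ 2 + b ^ 2 + c ^ 2 + 2 * a * b * c / d := by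
  have pi_pos := Real.pi_pos
  have hβ0 : 0 ≤ β := le_trans hγ hβγ
  have hγπ : γ ≤ Real.pi := le_trans hβγ hβ
  -- compute d
  have hd' : d = 2 * R := by
    rw [hd, hA, hD, distP _ _ _ hR.le]
    have : Real.sin ((Real.pi - 0) / 2) = 1 := by
      norm_num [Real.sin_pi_div_two]
    rw [this]; norm_num
  refine ⟨hd', ?_⟩
  -- compute a, b, c
  have hsa : 0 ≤ Real.sin ((Real.pi - β) / 2) :=
    Real.sin_nonneg_of_nonneg_of_le_pi (by linarith) (by linarith)
  have hsb : 0 ≤ Real.sin ((β - γ) / 2) :=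
    Real.sin_nonneg_of_nonneg_of_le_pi (by linarith) (by linarith)
  have hsc : 0 ≤ Real.sin ((γ - 0) / 2) :=
    Real.sin_nonneg_of_nonneg_of_le_pi (by linarith) (by linarith)
  have ha' : a = 2 * R * Real.sin ((Real.pi - β) / 2) := by
    rw [ha, hA, hB, distP _ _ _ hR.le, abs_of_nonneg hsa]
  have hb' : b = 2 * R * Real.sin ((β - γ) / 2) := by
    rw [hb, hB, hC, distP _ _ _ hR.le, abs_of_nonneg hsb]
  have hc' : c = 2 * R * Real.sin ((γ - 0) / 2) := by
    rw [hc, hC, hD, distP _ _ _ hR.le, abs_of_nonneg hsc]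
  -- a = 2R cos(β/2)
  have haa : a = 2 * R * Real.cos (β / 2) := by
    rw [ha']
    congr 1
    rw [show (Real.pi - β) / 2 = Real.pi / 2 - β / 2 by ring, Real.sin_pi_div_two_sub]
  have hcc : c = 2 * R * Real.sin (γ / 2) := by rw [hc']; norm_num
  -- trig identity
  set u := β / 2
  set v := γ / 2
  have hbb : b = 2 * R * Real.sin (u - v) := by
    rw [hb']; congr 2; unfold u v; ring
  have hcos : Real.cos u = Real.cos ((u - v) + v) := by ring_nf
  rw [Real.cos_add] at hcos
  have h1 := Real.sin_sq_add_cos_sq (u - v)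
  have h2 := Real.sin_sq_add_cos_sq v
  have hdne : d ≠ 0 := by rw [hd']; positivity
  rw [hd', haa, hbb, hcc]
  have hR2 : (2:ℝ) * R ≠ 0 := by positivity
  rw [hcos]
  field_simp
  linear_combination (-(1 - Real.sin (u-v)^2))*h2 + (-Real.cos v^2)*h1
end

section
/- Let a, b, c, d be real numbers with a > 0, b > 0, c > 0, d > 0 satisfying d² = a² + b² + c² + 2abc/d. Then there exists a quadrilateral with these side lengths inscribed in the semicircle having the side of length d as diameter: setting R = d/2, there exist angles β, γ with π ≥ β ≥ γ ≥ 0 such that, for A = (−R, 0), B = P_R(β), C = P_R(γ), D = (R, 0), one has dist A B = a, dist B C = b, and dist C D = c. -/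
lemma P_apply_zero (R θ : ℝ) : P R θ 0 = R * Real.cos θ := rfl

lemma P_apply_one (R θ : ℝ) : P R θ 1 = R * Real.sin θ := rfl

lemma dist_P (R θ φ : ℝ) (hR : 0 ≤ R) :
    dist (P R θ) (P R φ) = 2 * R * |Real.sin ((θ - φ) / 2)| := by
  have h1 : (R * Real.cos θ - R * Real.cos φ) ^ 2 + (R * Real.sin θ - R * Real.sin φ) ^ 2
      = (2 * R * Real.sin ((θ - φ) / 2)) ^ 2 := by
    have hhalf := Real.sin_sq_add_cos_sq ((θ - φ) / 2)
    have hcos2 : Real.cos (θ - φ) = 2 * Real.cos ((θ - φ) / 2) ^ 2 - 1 := by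
      have := Real.cos_two_mul ((θ - φ) / 2)
      rwa [show (2:ℝ) * ((θ - φ) / 2) = θ - φ by ring] at this
    have hc : Real.cos (θ - φ) = Real.cos θ * Real.cos φ + Real.sin θ * Real.sin φ :=
      Real.cos_sub _ _
    have hθ : Real.sin θ ^ 2 + Real.cos θ ^ 2 = 1 := Real.sin_sq_add_cos_sq θ
    have hφ : Real.sin φ ^ 2 + Real.cos φ ^ 2 = 1 := Real.sin_sq_add_cos_sq φ
    linear_combination R ^ 2 * hθ + R ^ 2 * hφ + 2 * R ^ 2 * hc - 2 * R ^ 2 * hcos2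
      - 4 * R ^ 2 * hhalf
  have h2 : dist (P R θ) (P R φ)
      = Real.sqrt ((R * Real.cos θ - R * Real.cos φ) ^ 2
        + (R * Real.sin θ - R * Real.sin φ) ^ 2) := by
    rw [EuclideanSpace.dist_eq, Fin.sum_univ_two, P_apply_zero, P_apply_zero,
      P_apply_one, P_apply_one, Real.dist_eq, Real.dist_eq, sq_abs, sq_abs]
  rw [h2, h1, Real.sqrt_sq_eq_abs, abs_mul, abs_of_nonneg (by positivity : (0:ℝ) ≤ 2 * R)]

set_option maxHeartbeats 1000000 in
theorem quadrilateral_existence (a b c d : ℝ)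
    (ha : 0 < a) (hb : 0 < b) (hc : 0 < c) (hd : 0 < d)
    (hrel : d ^ 2 = a ^ 2 + b ^ 2 + c ^ 2 + 2 * a * b * c / d) :
    ∃ β γ : ℝ, Real.pi ≥ β ∧ β ≥ γ ∧ γ ≥ 0 ∧
      dist (P (d / 2) Real.pi) (P (d / 2) β) = a ∧
      dist (P (d / 2) β) (P (d / 2) γ) = b ∧
      dist (P (d / 2) γ) (P (d / 2) 0) = c := by
  have hrel' : d ^ 3 = (a ^ 2 + b ^ 2 + c ^ 2) * d + 2 * a * b * c := by
    field_simp at hrel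
    nlinarith [hrel]
  have ha2 : a ^ 2 < d ^ 2 := by
    nlinarith [mul_pos (mul_pos ha hb) hc, mul_pos (mul_pos hb hb) hd,
      mul_pos (mul_pos hc hc) hd]
  have hc2 : c ^ 2 < d ^ 2 := by
    nlinarith [mul_pos (mul_pos ha hb) hc, mul_pos (mul_pos hb hb) hd,
      mul_pos (mul_pos ha ha) hd]
  have had : a < d := by nlinarith
  have hcd : c < d := by nlinarith
  have hadd : a / d ≤ 1 := by rw [div_le_one hd]; linarith
  have hadd' : (-1 : ℝ) ≤ a / d := by linarith [div_pos ha hd]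
  have hcdd : c / d ≤ 1 := by rw [div_le_one hd]; linarith
  have hcdd' : (-1 : ℝ) ≤ c / d := by linarith [div_pos hc hd]
  set α := Real.arcsin (a / d) with hαdef
  set δ := Real.arcsin (c / d) with hδdef
  have hsinα : Real.sin α = a / d := Real.sin_arcsin hadd' hadd
  have hsinδ : Real.sin δ = c / d := Real.sin_arcsin hcdd' hcdd
  have hcosα : Real.cos α = Real.sqrt (1 - (a / d) ^ 2) := Real.cos_arcsin _
  have hcosδ : Real.cos δ = Real.sqrt (1 - (c / d) ^ 2) := Real.cos_arcsin _
  have hαpos : 0 < α := Real.arcsin_pos.2 (by positivity)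
  have hδpos : 0 < δ := Real.arcsin_pos.2 (by positivity)
  have hαle : α ≤ Real.pi / 2 := Real.arcsin_le_pi_div_two _
  have hδle : δ ≤ Real.pi / 2 := Real.arcsin_le_pi_div_two _
  have key : (b * d + a * c) ^ 2 = (d ^ 2 - a ^ 2) * (d ^ 2 - c ^ 2) := by nlinarith [hrel']
  have hcossum : Real.cos (α + δ) = b / d := by
    rw [Real.cos_add, hsinα, hsinδ, hcosα, hcosδ,
      ← Real.sqrt_mul (by nlinarith : (0:ℝ) ≤ 1 - (a / d) ^ 2)]
    have heq : (1 - (a / d) ^ 2) * (1 - (c / d) ^ 2) = ((b * d + a * c) / d ^ 2) ^ 2 := by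
      field_simp
      nlinarith [key]
    rw [heq, Real.sqrt_sq (by positivity)]
    field_simp
    ring
  have hsumlt : α + δ < Real.pi / 2 := by
    by_contra h
    push_neg at h
    have h1 : Real.cos (α + δ) ≤ 0 :=
      Real.cos_nonpos_of_pi_div_two_le_of_le h (by linarith [Real.pi_pos])
    rw [hcossum] at h1
    have h2 : (0:ℝ) < b / d := by positivity
    linarith
  refine ⟨Real.pi - 2 * α, 2 * δ, by linarith, by linarith, by linarith, ?_, ?_, ?_⟩
  · rw [dist_P _ _ _ (by positivity)]
    have he : (Real.pi - (Real.pi - 2 * α)) / 2 = α := by ring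
    rw [he, abs_of_nonneg (Real.sin_nonneg_of_nonneg_of_le_pi hαpos.le
      (by linarith [Real.pi_pos])), hsinα]
    field_simp
  · rw [dist_P _ _ _ (by positivity)]
    have he : (Real.pi - 2 * α - 2 * δ) / 2 = Real.pi / 2 - (α + δ) := by ring
    rw [he, Real.sin_pi_div_two_sub, hcossum,
      abs_of_pos (by positivity : (0:ℝ) < b / d)]
    field_simp
  · rw [dist_P _ _ _ (by positivity)]
    have he : (2 * δ - 0) / 2 = δ := by ring
    rw [he, abs_of_nonneg (Real.sin_nonneg_of_nonneg_of_le_pi hδpos.le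
      (by linarith [Real.pi_pos])), hsinδ]
    field_simp
end
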